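/- Let Ω be a nonempty finite type and let E = ⟨𝓔, mod⟩ be an epistemic space over Ω. Then AGM revision is realizable in E (i.e., there exists an AGM revision operator for E) if and only if E satisfies both (ZR1) and (ZR2). -/
import Mathlib


open Set

/-- `minSet r S` is the set of `r`-minimal elements of `S`:
`min(S, r) = {ω ∈ S : r ω ω' for all ω' ∈ S}`. -/
def minSet {Ω : Type*} (r : Ω → Ω → Prop) (S : Set Ω) : Set Ω :=
  {ω ∈ S | ∀ ω' ∈ S, r ω ω'}

/-- A linear order as a relation: total, antisymmetric and transitive. -/
def IsLinRel {Ω : Type*} (r : Ω → Ω → Prop) : Prop :=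
  (∀ a b, r a b ∨ r b a) ∧ (∀ a b, r a b → r b a → a = b) ∧
    (∀ a b c, r a b → r b c → r a c)

/-- AGM contraction operator for the epistemic space `⟨E, md⟩` (postulates C1–C7,
formulated on model sets). -/
def IsContraction {Ω E : Type*} (md : E → Set Ω) (c : E → Set Ω → E) : Prop :=
  ∀ (Ψ : E) (A B : Set Ω),
    md Ψ ⊆ md (c Ψ A) ∧
    (¬ md Ψ ⊆ A → md (c Ψ A) ⊆ md Ψ) ∧
    (A ≠ Set.univ → ¬ md (c Ψ A) ⊆ A) ∧
    md (c Ψ A) ∩ A ⊆ md Ψ ∧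
    md (c Ψ (A ∩ B)) ⊆ md (c Ψ A) ∪ md (c Ψ B) ∧
    (¬ md (c Ψ (A ∩ B)) ⊆ B → md (c Ψ B) ⊆ md (c Ψ (A ∩ B)))

/-- AGM revision operator for the epistemic space `⟨E, md⟩` (postulates R1–R6,
formulated on model sets). -/
def IsRevision {Ω E : Type*} (md : E → Set Ω) (s : E → Set Ω → E) : Prop :=
  ∀ (Ψ : E) (A B : Set Ω),
    md (s Ψ A) ⊆ A ∧
    (md Ψ ∩ A ≠ ∅ → md (s Ψ A) = md Ψ ∩ A) ∧
    (A ≠ ∅ → md (s Ψ A) ≠ ∅) ∧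
    md (s Ψ A) ∩ B ⊆ md (s Ψ (A ∩ B)) ∧
    (md (s Ψ A) ∩ B ≠ ∅ → md (s Ψ (A ∩ B)) ⊆ md (s Ψ A) ∩ B)

/-- Postulate (ZC). -/
def ZC {Ω E : Type*} (md : E → Set Ω) : Prop :=
  ∀ (Ψ : E) (M : Set Ω), md Ψ ⊆ M → ∃ Ψ' : E, md Ψ' = M

/-- Postulate (ZR1). -/
def ZR1 {Ω E : Type*} (md : E → Set Ω) : Prop :=
  ∀ ω : Ω, ∃ Ψ : E, md Ψ = {ω}

/-- Postulate (ZR2). -/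
def ZR2 {Ω E : Type*} (md : E → Set Ω) : Prop :=
  ∀ (Ψ : E) (M : Set Ω), M ⊆ md Ψ → ∃ Ψ' : E, md Ψ' = M

/-- Postulate (Unbiased). -/
def Unbiased {Ω E : Type*} (md : E → Set Ω) : Prop :=
  ∀ M : Set Ω, ∃ Ψ : E, md Ψ = M

/-- Maxichoice contraction operator. -/
def IsMaxichoiceContraction {Ω E : Type*} (md : E → Set Ω) (c : E → Set Ω → E) : Prop :=
  IsContraction md c ∧
    ∀ Ψ : E, ∃ r : Ω → Ω → Prop, IsLinRel r ∧ ∀ A : Set Ω,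
      (¬ md Ψ ⊆ A → md (c Ψ A) = md Ψ) ∧
      (md Ψ ⊆ A → md (c Ψ A) = md Ψ ∪ minSet r Aᶜ)

/-- Linear contraction operator: a maxichoice contraction operator based on one
single linear order for all epistemic states. -/
def IsLinearContraction {Ω E : Type*} (md : E → Set Ω) (c : E → Set Ω → E) : Prop :=
  IsContraction md c ∧
    ∃ r : Ω → Ω → Prop, IsLinRel r ∧ ∀ (Ψ : E) (A : Set Ω),
      (¬ md Ψ ⊆ A → md (c Ψ A) = md Ψ) ∧
      (md Ψ ⊆ A → md (c Ψ A) = md Ψ ∪ minSet r Aᶜ)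

/-- Full meet contraction operator. -/
def IsFullMeetContraction {Ω E : Type*} (md : E → Set Ω) (c : E → Set Ω → E) : Prop :=
  IsContraction md c ∧
    ∀ (Ψ : E) (A : Set Ω),
      (¬ md Ψ ⊆ A → md (c Ψ A) = md Ψ) ∧
      (md Ψ ⊆ A → md (c Ψ A) = md Ψ ∪ Aᶜ)

/-- Maxichoice revision operator. -/
def IsMaxichoiceRevision {Ω E : Type*} (md : E → Set Ω) (s : E → Set Ω → E) : Prop :=
  IsRevision md s ∧
    ∀ Ψ : E, ∃ r : Ω → Ω → Prop, IsLinRel r ∧ ∀ A : Set Ω,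
      (md Ψ ∩ A ≠ ∅ → md (s Ψ A) = md Ψ ∩ A) ∧
      (md Ψ ∩ A = ∅ → md (s Ψ A) = minSet r A)

/-- Linear revision operator: a maxichoice revision operator based on one single
linear order for all epistemic states. -/
def IsLinearRevision {Ω E : Type*} (md : E → Set Ω) (s : E → Set Ω → E) : Prop :=
  IsRevision md s ∧
    ∃ r : Ω → Ω → Prop, IsLinRel r ∧ ∀ (Ψ : E) (A : Set Ω),
      (md Ψ ∩ A ≠ ∅ → md (s Ψ A) = md Ψ ∩ A) ∧
      (md Ψ ∩ A = ∅ → md (s Ψ A) = minSet r A)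

/-- Full meet revision operator. -/
def IsFullMeetRevision {Ω E : Type*} (md : E → Set Ω) (s : E → Set Ω → E) : Prop :=
  IsRevision md s ∧
    ∀ (Ψ : E) (A : Set Ω),
      (md Ψ ∩ A ≠ ∅ → md (s Ψ A) = md Ψ ∩ A) ∧
      (md Ψ ∩ A = ∅ → md (s Ψ A) = A)


/-- AGM revision is realizable in `⟨E, md⟩` iff `⟨E, md⟩` satisfies
both (ZR1) and (ZR2). -/
theorem revision_realizable_iff_ZR1_ZR2 {Ω E : Type*} [Fintype Ω] [Nonempty Ω] [Nonempty E]
    (md : E → Set Ω) :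
    (∃ s : E → Set Ω → E, IsRevision md s) ↔ (ZR1 md ∧ ZR2 md) := by
  classical
  constructor
  · rintro ⟨s, hs⟩
    obtain ⟨Ψ₀⟩ := (inferInstance : Nonempty E)
    refine ⟨fun ω => ⟨s Ψ₀ {ω}, ?_⟩, fun Ψ M hM => ?_⟩
    · have h := hs Ψ₀ {ω} {ω}
      have h3 : md (s Ψ₀ {ω}) ≠ ∅ := h.2.2.1 (Set.singleton_nonempty ω).ne_empty
      have h1 := h.1
      obtain ⟨x, hx⟩ := Set.nonempty_iff_ne_empty.2 h3
      exact Set.eq_singleton_iff_nonempty_unique_mem.2 ⟨⟨x, hx⟩, fun y hy => h1 hy⟩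
    · rcases eq_or_ne M ∅ with rfl | hne
      · exact ⟨s Ψ ∅, Set.subset_empty_iff.1 (hs Ψ ∅ ∅).1⟩
      · refine ⟨s Ψ M, ?_⟩
        have := (hs Ψ M M).2.1 (by rwa [Set.inter_eq_self_of_subset_right hM])
        rwa [Set.inter_eq_self_of_subset_right hM] at this
  · rintro ⟨h1, h2⟩
    haveI : LinearOrder Ω := LinearOrder.lift' (Fintype.equivFin Ω) (Fintype.equivFin Ω).injective
    choose f hf using fun (Ψ : E) (M : Set Ω) (h : M ⊆ md Ψ) => h2 Ψ M h
    choose g hg using h1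
    choose m hmem hle using fun (A : Set Ω) (h : A.Nonempty) =>
      Set.exists_min_image A id A.toFinite h
    set s : E → Set Ω → E := fun Ψ A =>
      if h : (md Ψ ∩ A).Nonempty then f Ψ (md Ψ ∩ A) Set.inter_subset_left
      else if hA : A.Nonempty then g (m A hA)
      else f Ψ ∅ (Set.empty_subset _) with hsdef
    have case1 : ∀ Ψ A, (md Ψ ∩ A).Nonempty → md (s Ψ A) = md Ψ ∩ A := by
      intro Ψ A h
      simp only [hsdef, dif_pos h]
      exact hf _ _ _
    have case2 : ∀ Ψ A (h : (md Ψ ∩ A) = ∅) (hA : A.Nonempty),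
        md (s Ψ A) = {m A hA} := by
      intro Ψ A h hA
      simp only [hsdef, dif_neg (Set.not_nonempty_iff_eq_empty.2 h), dif_pos hA]
      exact hg _
    have case3 : ∀ Ψ A, A = ∅ → md (s Ψ A) = ∅ := by
      intro Ψ A hA
      subst hA
      have hne : ¬ (md Ψ ∩ (∅ : Set Ω)).Nonempty := by simp
      have hne2 : ¬ (∅ : Set Ω).Nonempty := by simp
      simp only [hsdef, dif_neg hne, dif_neg hne2]
      exact hf _ _ _
    have min_coh : ∀ (A B : Set Ω) (hA : A.Nonempty),
        m A hA ∈ B → ∀ (hAB : (A ∩ B).Nonempty), m (A ∩ B) hAB = m A hA := by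
      intro A B hA hB hAB
      apply le_antisymm
      · exact hle (A ∩ B) hAB _ ⟨hmem A hA, hB⟩
      · exact hle A hA _ (hmem (A ∩ B) hAB).1
    refine ⟨s, fun Ψ A B => ?_⟩
    have hinter : md Ψ ∩ (A ∩ B) = (md Ψ ∩ A) ∩ B := (Set.inter_assoc _ _ _).symm
    refine ⟨?_, ?_, ?_, ?_, ?_⟩
    · -- R1
      by_cases h : (md Ψ ∩ A).Nonempty
      · rw [case1 Ψ A h]; exact Set.inter_subset_right
      · rcases eq_or_ne A ∅ with rfl | hA
        · rw [case3 Ψ ∅ rfl]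
        · rw [case2 Ψ A (Set.not_nonempty_iff_eq_empty.1 h) (Set.nonempty_iff_ne_empty.2 hA)]
          exact Set.singleton_subset_iff.2 (hmem A _)
    · -- R2
      intro h
      exact case1 Ψ A (Set.nonempty_iff_ne_empty.2 h)
    · -- R3
      intro hA
      by_cases h : (md Ψ ∩ A).Nonempty
      · rw [case1 Ψ A h]; exact h.ne_empty
      · rw [case2 Ψ A (Set.not_nonempty_iff_eq_empty.1 h) (Set.nonempty_iff_ne_empty.2 hA)]
        exact (Set.singleton_nonempty _).ne_empty
    · -- R5
      by_cases h : (md Ψ ∩ A).Nonempty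
      · rw [case1 Ψ A h]
        intro x hx
        have hne : (md Ψ ∩ (A ∩ B)).Nonempty := by
          rw [hinter]; exact ⟨x, hx⟩
        rw [case1 Ψ (A ∩ B) hne, hinter]
        exact hx
      · rcases eq_or_ne A ∅ with rfl | hA
        · rw [case3 Ψ ∅ rfl]; simp
        · have hA' := Set.nonempty_iff_ne_empty.2 hA
          rw [case2 Ψ A (Set.not_nonempty_iff_eq_empty.1 h) hA']
          intro x hx
          obtain ⟨hx1, hx2⟩ := hx
          rw [Set.mem_singleton_iff] at hx1
          subst hx1
          have hABne : (A ∩ B).Nonempty := ⟨_, hmem A hA', hx2⟩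
          have hempty : md Ψ ∩ (A ∩ B) = ∅ := by
            rw [hinter, Set.not_nonempty_iff_eq_empty.1 h]
            simp
          rw [case2 Ψ (A ∩ B) hempty hABne, min_coh A B hA' hx2 hABne]
          exact rfl
    · -- R6
      intro hne
      by_cases h : (md Ψ ∩ A).Nonempty
      · rw [case1 Ψ A h] at hne ⊢
        have hne' : (md Ψ ∩ (A ∩ B)).Nonempty := by
          rw [hinter]; exact Set.nonempty_iff_ne_empty.2 hne
        rw [case1 Ψ (A ∩ B) hne', hinter]
      · rcases eq_or_ne A ∅ with rfl | hA
        · exact absurd (by rw [case3 Ψ ∅ rfl]; simp) hne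
        · have hA' := Set.nonempty_iff_ne_empty.2 hA
          rw [case2 Ψ A (Set.not_nonempty_iff_eq_empty.1 h) hA'] at hne ⊢
          obtain ⟨x, hx1, hx2⟩ := Set.nonempty_iff_ne_empty.2 hne
          rw [Set.mem_singleton_iff] at hx1
          subst hx1
          have hABne : (A ∩ B).Nonempty := ⟨_, hmem A hA', hx2⟩
          have hempty : md Ψ ∩ (A ∩ B) = ∅ := by
            rw [hinter, Set.not_nonempty_iff_eq_empty.1 h]
            simp
          rw [case2 Ψ (A ∩ B) hempty hABne, min_coh A B hA' hx2 hABne]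
          exact Set.singleton_subset_iff.2 ⟨rfl, hx2⟩
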